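/- Let V be a finite-dimensional real vector space with a non-degenerate symmetric bilinear form g, let ω ∈ V with g(ω,ω) ≠ 0, and set H = {v : g(ω,v)=0}. Let π denote the g-orthogonal projection onto H. Suppose b ∈ V satisfies g(ξ, b) = 0 for some ξ with g(ω,ξ) ≠ 0, and A is the operator Aη = η − (g(ω,η)/g(ω,ξ))ξ − (g(ξ,η)/g(ω,ξ))ω + (g(ξ,ξ)g(ω,η)/g(ω,ξ)²)ω. Then A(π(b)) = b. -/

import Mathlib

/-- If `g(ξ,b) = 0` then `η = π(b)` (the `g`-orthogonal projection of `b` onto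
`H = {v : g(ω,v)=0}`) solves `A η = b`, where `A` is the Hessian operator of the
Kropina Lagrangian. -/
theorem stmt3 {V : Type*} [AddCommGroup V] [Module ℝ V] [FiniteDimensional ℝ V]
    (g : V →ₗ[ℝ] V →ₗ[ℝ] ℝ) (hg : ∀ v w, g v w = g w v)
    (hnd : ∀ v, (∀ w, g v w = 0) → v = 0)
    (ω ξ b : V) (hωω : g ω ω ≠ 0) (hξ : g ω ξ ≠ 0) (hb : g ξ b = 0) :
    (fun η : V => η - (g ω η / g ω ξ) • ξ - (g ξ η / g ω ξ) • ω
        + ((g ξ ξ * g ω η) / (g ω ξ) ^ 2) • ω)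
      (b - (g ω b / g ω ω) • ω) = b := by
  have hωη : g ω (b - (g ω b / g ω ω) • ω) = 0 := by
    simp only [map_sub, map_smul, smul_eq_mul]
    field_simp
    ring
  have hξη : g ξ (b - (g ω b / g ω ω) • ω) = -(g ω b / g ω ω * g ω ξ) := by
    simp only [map_sub, map_smul, smul_eq_mul, hb, hg ξ ω]
    ring
  simp only [hωη, hξη]
  have h : -(g ω b / g ω ω * g ω ξ) / g ω ξ = -(g ω b / g ω ω) := by
    field_simp
  rw [h]
  simp only [zero_div, zero_smul, mul_zero, sub_zero, add_zero, neg_smul, sub_neg_eq_add]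
  abel
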